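/- arXiv:2504.03952 — 3 statements merged into one kernel-verified Lean document; each statement's English description precedes it below -/
import Mathlib

section
/- Let φ be a unit eigenvector of H = ∫₀^{1-γ} μ_α μ_α^⊤ dα with eigenvalue σ, and suppose γ ≤ 2/3. Then for every α ∈ [0, 1-γ], |μ_α^⊤ φ| ≤ √(2/γ)·σ^{1/4}. -/
open MeasureTheory Finset


lemma aux_choose (i : ℕ) : ((i+1 : ℕ) : ℝ) * ((i+2 : ℕ) : ℝ) = 2 * ((i+2).choose 2 : ℕ) := by
  have h : (i+2).choose 2 * 2 = (i+1) * (i+2) := by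
    rw [Nat.choose_two_right]
    have hsub : i + 2 - 1 = i + 1 := rfl
    rw [hsub]
    have he : 2 ∣ (i+2) * (i+1) := by
      rcases Nat.even_or_odd i with ⟨t, ht⟩ | ⟨t, ht⟩
      · exact (Dvd.intro (t+1) (by omega)).mul_right _
      · exact (Dvd.intro (t+1) (by omega)).mul_left _
    rw [Nat.div_mul_cancel he]; ring
  have := congrArg (fun n : ℕ => (n : ℝ)) h
  push_cast at this ⊢
  linarith

lemma aux_series (y : ℝ) (hy0 : 0 ≤ y) (hy1 : y < 1) (n : ℕ) :
    ∑ i ∈ Finset.range n, (i:ℝ)^2 * y^(i-1) ≤ 2 / (1-y)^3 := by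
  have h1y : 0 < 1 - y := by linarith
  cases n with
  | zero => simp; positivity
  | succ k =>
    rw [Finset.sum_range_succ']
    have hz : ((0:ℕ):ℝ)^2 * y^(0-1) = 0 := by norm_num
    have hrw : ∀ i : ℕ, ((i+1:ℕ):ℝ)^2 * y^(i+1-1) = ((i:ℝ)+1)^2 * y^i := by
      intro i; push_cast [Nat.add_sub_cancel]; ring
    simp only [hrw, hz, add_zero]
    have hnorm : ‖y‖ < 1 := by rw [Real.norm_eq_abs, abs_of_nonneg hy0]; exact hy1
    have hS : HasSum (fun n : ℕ => ((n+2).choose 2 : ℝ) * y ^ n) (1/(1-y)^3) := by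
      simpa using hasSum_choose_mul_geometric_of_norm_lt_one 2 hnorm
    have h2 : ∑ i ∈ Finset.range k, ((i:ℝ)+1)^2 * y^i
        ≤ ∑ i ∈ Finset.range k, 2 * (((i+2).choose 2 : ℕ) : ℝ) * y^i := by
      apply Finset.sum_le_sum
      intro i _
      have : ((i:ℝ)+1)^2 ≤ 2 * (((i+2).choose 2 : ℕ) : ℝ) := by
        have := aux_choose i
        push_cast at this ⊢
        nlinarith [this]
      have hy : (0:ℝ) ≤ y ^ i := by positivity
      nlinarith [this, hy]
    have h3 : ∑ i ∈ Finset.range k, 2 * (((i+2).choose 2 : ℕ) : ℝ) * y^i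
        = 2 * ∑ i ∈ Finset.range k, (((i+2).choose 2 : ℕ) : ℝ) * y^i := by
      rw [Finset.mul_sum]; congr 1; funext i; ring
    have h4 : ∑ i ∈ Finset.range k, (((i+2).choose 2 : ℕ) : ℝ) * y^i ≤ 1/(1-y)^3 := by
      refine (Summable.sum_le_tsum (Finset.range k) (fun i _ => by positivity) hS.summable).trans ?_
      rw [hS.tsum_eq]
    calc ∑ i ∈ Finset.range k, ((i:ℝ)+1)^2 * y^i ≤ _ := h2
      _ = _ := h3
      _ ≤ 2 * (1/(1-y)^3) := by linarith
      _ = 2/(1-y)^3 := by ring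


lemma aux_pow_sub (x t a : ℝ) (ht : t ∈ Set.Icc 0 x) (ha : a ∈ Set.Icc 0 x) (n : ℕ) :
    |t^n - a^n| ≤ (n : ℝ) * x^(n-1) * |t - a| := by
  have hx0 : 0 ≤ x := le_trans ht.1 ht.2
  rw [← geom_sum₂_mul t a n, abs_mul]
  have hb : |∑ i ∈ range n, t ^ i * a ^ (n - 1 - i)| ≤ (n : ℝ) * x^(n-1) := by
    calc |∑ i ∈ range n, t ^ i * a ^ (n - 1 - i)|
        ≤ ∑ i ∈ range n, |t ^ i * a ^ (n - 1 - i)| := Finset.abs_sum_le_sum_abs _ _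
      _ ≤ ∑ i ∈ range n, x^(n-1) := by
          apply Finset.sum_le_sum
          intro i hi
          rw [Finset.mem_range] at hi
          rw [abs_mul, abs_pow, abs_pow, abs_of_nonneg ht.1, abs_of_nonneg ha.1]
          calc t ^ i * a ^ (n - 1 - i) ≤ x ^ i * x ^ (n - 1 - i) := by
                apply mul_le_mul (pow_le_pow_left₀ ht.1 ht.2 i)
                  (pow_le_pow_left₀ ha.1 ha.2 _) (pow_nonneg ha.1 _) (pow_nonneg hx0 i)
            _ = x ^ (n - 1) := by rw [← pow_add]; congr 1; omega
      _ = (n : ℝ) * x^(n-1) := by rw [Finset.sum_const, Finset.card_range, nsmul_eq_mul]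
  exact mul_le_mul_of_nonneg_right hb (abs_nonneg _)


lemma aux_CS (m : ℕ) (φ : Fin m → ℝ) (hunit : ∑ i, φ i ^ 2 = 1) (v : Fin m → ℝ) :
    (∑ i, v i * φ i)^2 ≤ ∑ i, v i ^ 2 := by
  calc (∑ i, v i * φ i)^2 ≤ (∑ i, v i ^ 2) * ∑ i, φ i ^ 2 :=
        Finset.sum_mul_sq_le_sq_mul_sq _ _ _
    _ = ∑ i, v i ^ 2 := by rw [hunit, mul_one]

lemma aux_geom (m : ℕ) (t : ℝ) (ht0 : 0 ≤ t) (ht1 : t < 1) :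
    ∑ i : Fin m, (t ^ (i:ℕ))^2 ≤ (1 - t)⁻¹ := by
  rw [Fin.sum_univ_eq_sum_range (fun i => (t ^ i)^2)]
  have h1 : ∀ i ∈ Finset.range m, (t ^ i)^2 ≤ t ^ i := fun i _ => by
    rw [← pow_mul]
    exact pow_le_pow_of_le_one ht0 ht1.le (by omega)
  calc ∑ i ∈ Finset.range m, (t ^ i)^2 ≤ ∑ i ∈ Finset.range m, t ^ i :=
        Finset.sum_le_sum h1
    _ ≤ (1 - t)⁻¹ := by
        refine (Summable.sum_le_tsum (Finset.range m) (fun i _ => by positivity) ?_).trans_eq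
          (tsum_geometric_of_lt_one ht0 ht1)
        exact summable_geometric_of_lt_one ht0 ht1

lemma aux_diff_sq (γ : ℝ) (hγ0 : 0 < γ) (hγ23 : γ ≤ 2/3) (m : ℕ) (φ : Fin m → ℝ)
    (hunit : ∑ i, φ i ^ 2 = 1) (t s : ℝ)
    (ht : t ∈ Set.Icc 0 (1-γ)) (hs : s ∈ Set.Icc 0 (1-γ)) :
    ((∑ i : Fin m, t ^ (i:ℕ) * φ i) - ∑ i : Fin m, s ^ (i:ℕ) * φ i)^2 ≤ (t-s)^2 / γ^3 := by
  set x : ℝ := 1 - γ with hxdef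
  have hx0 : 0 ≤ x := by simp only [hxdef]; linarith
  have hx1 : x < 1 := by simp only [hxdef]; linarith
  have h1 : (∑ i : Fin m, t ^ (i:ℕ) * φ i) - ∑ i : Fin m, s ^ (i:ℕ) * φ i
      = ∑ i : Fin m, (t ^ (i:ℕ) - s ^ (i:ℕ)) * φ i := by
    rw [← Finset.sum_sub_distrib]; congr 1; funext i; ring
  rw [h1]
  refine (aux_CS m φ hunit _).trans ?_
  have h2 : ∀ i : Fin m, (t ^ (i:ℕ) - s ^ (i:ℕ))^2
      ≤ ((i:ℕ):ℝ)^2 * (x^2)^((i:ℕ)-1) * (t-s)^2 := by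
    intro i
    have := aux_pow_sub x t s ht hs (i:ℕ)
    have h3 : (t ^ (i:ℕ) - s ^ (i:ℕ))^2 ≤ (((i:ℕ):ℝ) * x^((i:ℕ)-1) * |t - s|)^2 := by
      rw [← sq_abs (t ^ (i:ℕ) - s ^ (i:ℕ))]
      exact pow_le_pow_left₀ (abs_nonneg _) this 2
    refine h3.trans_eq ?_
    rw [mul_pow, mul_pow, sq_abs, ← pow_mul, ← pow_mul]
    ring_nf
  calc ∑ i : Fin m, (t ^ (i:ℕ) - s ^ (i:ℕ))^2
      ≤ ∑ i : Fin m, ((i:ℕ):ℝ)^2 * (x^2)^((i:ℕ)-1) * (t-s)^2 :=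
        Finset.sum_le_sum (fun i _ => h2 i)
    _ = (∑ i : Fin m, ((i:ℕ):ℝ)^2 * (x^2)^((i:ℕ)-1)) * (t-s)^2 := by
        rw [Finset.sum_mul]
    _ ≤ (2 / (1 - x^2)^3) * (t-s)^2 := by
        apply mul_le_mul_of_nonneg_right _ (sq_nonneg _)
        rw [Fin.sum_univ_eq_sum_range (fun i => ((i:ℕ):ℝ)^2 * (x^2)^(i-1))]
        exact aux_series (x^2) (by positivity) (by nlinarith) m
    _ ≤ (t-s)^2 / γ^3 := by
        have h4 : 1 - x^2 = γ * (2 - γ) := by simp only [hxdef]; ring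
        have hpos : (0:ℝ) < 1 - x^2 := by rw [h4]; nlinarith
        have h6 : (2:ℝ) ≤ (2-γ)^3 := by nlinarith [sq_nonneg (2-γ), sq_nonneg (γ - 2/3)]
        have h5 : (2:ℝ) * γ^3 ≤ (1 - x^2)^3 := by
          rw [h4]
          calc (2:ℝ) * γ^3 ≤ (2-γ)^3 * γ^3 := by nlinarith [pow_pos hγ0 3]
            _ = (γ*(2-γ))^3 := by ring
        rw [div_mul_eq_mul_div, div_le_div_iff₀ (by positivity) (by positivity)]
        nlinarith [sq_nonneg (t-s), pow_pos hγ0 3]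

lemma aux_bound (γ : ℝ) (hγ0 : 0 < γ) (m : ℕ) (φ : Fin m → ℝ) (hunit : ∑ i, φ i ^ 2 = 1) (t : ℝ) (ht : t ∈ Set.Icc 0 (1-γ)) :
    (∑ i : Fin m, t ^ (i:ℕ) * φ i)^2 ≤ 1/γ := by
  refine (aux_CS m φ hunit _).trans ?_
  have ht1 : t < 1 := by rcases ht with ⟨h1, h2⟩; linarith
  refine (aux_geom m t ht.1 ht1).trans ?_
  rw [one_div]
  have : γ ≤ 1 - t := by rcases ht with ⟨h1, h2⟩; linarith
  exact inv_anti₀ hγ0 this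

lemma aux_lip (γ : ℝ) (hγ0 : 0 < γ) (hγ23 : γ ≤ 2 / 3) (m : ℕ) (φ : Fin m → ℝ) (hunit : ∑ i, φ i ^ 2 = 1) (t s : ℝ) (ht : t ∈ Set.Icc 0 (1-γ)) (hs : s ∈ Set.Icc 0 (1-γ)) :
    |(∑ i : Fin m, t ^ (i:ℕ) * φ i)^2 - (∑ i : Fin m, s ^ (i:ℕ) * φ i)^2|
      ≤ 2/γ^2 * |t - s| := by
  set Ft := ∑ i : Fin m, t ^ (i:ℕ) * φ i
  set Fs := ∑ i : Fin m, s ^ (i:ℕ) * φ i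
  have hd : |Ft - Fs| ≤ Real.sqrt ((t-s)^2/γ^3) := by
    rw [← Real.sqrt_sq_eq_abs]
    exact Real.sqrt_le_sqrt (aux_diff_sq γ hγ0 hγ23 m φ hunit t s ht hs)
  have habs : ∀ u : ℝ, u ∈ Set.Icc 0 (1-γ) →
      |∑ i : Fin m, u ^ (i:ℕ) * φ i| ≤ Real.sqrt (1/γ) := by
    intro u hu
    rw [← Real.sqrt_sq_eq_abs]
    exact Real.sqrt_le_sqrt (aux_bound γ hγ0 m φ hunit u hu)
  have hsum : |Ft + Fs| ≤ 2 * Real.sqrt (1/γ) := by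
    calc |Ft + Fs| ≤ |Ft| + |Fs| := abs_add_le _ _
      _ ≤ Real.sqrt (1/γ) + Real.sqrt (1/γ) := add_le_add (habs t ht) (habs s hs)
      _ = 2 * Real.sqrt (1/γ) := by ring
  have key : Real.sqrt ((t-s)^2/γ^3) * (2 * Real.sqrt (1/γ)) = 2/γ^2 * |t - s| := by
    rw [mul_comm (2:ℝ) (Real.sqrt (1/γ)), ← mul_assoc, ← Real.sqrt_mul (by positivity)]
    have : (t-s)^2/γ^3 * (1/γ) = (|t-s|/γ^2)^2 := by
      rw [div_pow, sq_abs]; ring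
    rw [this, Real.sqrt_sq (by positivity)]
    ring
  calc |Ft^2 - Fs^2| = |Ft - Fs| * |Ft + Fs| := by
        rw [← abs_mul]; congr 1; ring
    _ ≤ Real.sqrt ((t-s)^2/γ^3) * (2 * Real.sqrt (1/γ)) :=
        mul_le_mul hd hsum (abs_nonneg _) (Real.sqrt_nonneg _)
    _ = 2/γ^2 * |t - s| := key



lemma aux_sigma (γ : ℝ) (m : ℕ)
    (μ : ℝ → Fin m → ℝ) (hμ : ∀ α i, μ α i = α ^ (i : ℕ))
    (H : Matrix (Fin m) (Fin m) ℝ)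
    (hH : ∀ i j, H i j = ∫ α in (0:ℝ)..(1 - γ), μ α i * μ α j)
    (φ : Fin m → ℝ) (σ : ℝ)
    (heig : H.mulVec φ = σ • φ) (hunit : ∑ i, φ i ^ 2 = 1) :
    σ = ∫ t in (0:ℝ)..(1-γ), (∑ i : Fin m, t ^ (i:ℕ) * φ i)^2 := by
  have hH2 : ∀ i j : Fin m, H i j = ∫ t in (0:ℝ)..(1-γ), t^(i:ℕ) * t^(j:ℕ) := by
    intro i j; rw [hH]; simp only [hμ]
  have hφH : ∑ i, φ i * (H.mulVec φ) i = σ := by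
    rw [heig]
    have : ∀ i, φ i * (σ • φ) i = σ * φ i ^ 2 := by
      intro i; simp [Pi.smul_apply, smul_eq_mul]; ring
    simp_rw [this, ← Finset.mul_sum, hunit, mul_one]
  have hexp : ∀ t : ℝ, (∑ i : Fin m, t ^ (i:ℕ) * φ i)^2
      = ∑ i : Fin m, ∑ j : Fin m, (φ i * φ j) * (t^(i:ℕ) * t^(j:ℕ)) := by
    intro t
    rw [sq, Finset.sum_mul_sum]
    exact Finset.sum_congr rfl fun i _ => Finset.sum_congr rfl fun j _ => by ring
  have hIntId : (∫ t in (0:ℝ)..(1-γ), (∑ i : Fin m, t ^ (i:ℕ) * φ i)^2)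
      = ∑ i : Fin m, ∑ j : Fin m, (φ i * φ j) * H i j := by
    simp_rw [hexp]
    rw [intervalIntegral.integral_finset_sum]
    · refine Finset.sum_congr rfl fun i _ => ?_
      rw [intervalIntegral.integral_finset_sum]
      · refine Finset.sum_congr rfl fun j _ => ?_
        rw [intervalIntegral.integral_const_mul, hH2 i j]
      · intro j _
        exact Continuous.intervalIntegrable (by continuity) _ _
    · intro i _
      exact Continuous.intervalIntegrable (by continuity) _ _
  rw [hIntId, ← hφH]
  refine Finset.sum_congr rfl fun i _ => ?_
  rw [Matrix.mulVec, dotProduct, Finset.mul_sum]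
  exact Finset.sum_congr rfl fun j _ => by ring

lemma aux_lin (u v C D : ℝ) : ∫ t in u..v, (C + D * t) = C*(v-u) + D*((v^2-u^2)/2) := by
  have hd : ∀ t ∈ Set.uIcc u v, HasDerivAt (fun t => C*t + D*(t^2/2)) (C + D*t) t := by
    intro t _
    have h1 : HasDerivAt (fun t : ℝ => C*t) C t := by
      simpa using (hasDerivAt_id t).const_mul C
    have h2 : HasDerivAt (fun t : ℝ => D*(t^2/2)) (D*t) t := by
      have := ((hasDerivAt_pow 2 t).div_const 2).const_mul D
      refine this.congr_deriv ?_
      norm_num <;> ring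
    exact h1.add h2
  rw [intervalIntegral.integral_eq_sub_of_hasDerivAt hd
    ((by fun_prop : Continuous fun t : ℝ => C + D*t).intervalIntegrable _ _)]
  ring

set_option maxHeartbeats 1000000

/-- Let `φ` be a unit eigenvector of `H = ∫₀^{1-γ} μ_α μ_α^⊤ dα` with eigenvalue
`σ ≥ 0`, and suppose `γ ≤ 2/3`. Then for every `α ∈ [0, 1-γ]`,
`|μ_α^⊤ φ| ≤ √(2/γ)·σ^{1/4}`. -/
theorem proj_le_sqrt_eigenvalue (γ : ℝ) (hγ0 : 0 < γ) (hγ23 : γ ≤ 2 / 3) (m : ℕ)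
    (μ : ℝ → Fin m → ℝ) (hμ : ∀ α i, μ α i = α ^ (i : ℕ))
    (H : Matrix (Fin m) (Fin m) ℝ)
    (hH : ∀ i j, H i j = ∫ α in (0:ℝ)..(1 - γ), μ α i * μ α j)
    (φ : Fin m → ℝ) (σ : ℝ) (hσ : 0 ≤ σ)
    (heig : H.mulVec φ = σ • φ) (hunit : ∑ i, φ i ^ 2 = 1) :
    ∀ α ∈ Set.Icc (0:ℝ) (1 - γ),
      |∑ i, μ α i * φ i| ≤ Real.sqrt (2 / γ) * σ ^ ((1:ℝ) / 4) := by
  intro a ha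
  simp only [hμ]
  set M : ℝ := (∑ i : Fin m, a ^ (i:ℕ) * φ i)^2 with hMdef
  have hM0 : 0 ≤ M := sq_nonneg _
  have hM1 : M ≤ 1/γ := aux_bound γ hγ0 m φ hunit a ha
  set L : ℝ := 2/γ^2 with hLdef
  set h : ℝ := M * γ^2 / 2 with hhdef
  have hL0 : 0 < L := by rw [hLdef]; positivity
  have hLh : L * h = M := by rw [hLdef, hhdef]; field_simp
  have hh0 : 0 ≤ h := by rw [hhdef]; positivity
  have hhx : h ≤ 1 - γ := by
    have hmg : M * γ^2 ≤ (1/γ) * γ^2 := mul_le_mul_of_nonneg_right hM1 (sq_nonneg γ)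
    have hmg2 : (1/γ)*γ^2 = γ := by field_simp
    have h1 : h ≤ γ/2 := by rw [hhdef]; linarith
    linarith
  set c : ℝ := min a (1 - γ - h) with hcdef
  have hc0 : 0 ≤ c := le_min ha.1 (by linarith)
  have hca : c ≤ a := min_le_left _ _
  have hac : a ≤ c + h := by
    rcases le_total a (1-γ-h) with hle | hle
    · rw [hcdef, min_eq_left hle]; linarith
    · rw [hcdef, min_eq_right hle]; linarith [ha.2]
  have hchx : c + h ≤ 1-γ := by
    have := min_le_right a (1-γ-h); linarith
  have hax : a ≤ 1 - γ := ha.2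
  have hFc : Continuous (fun t : ℝ => (∑ i : Fin m, t ^ (i:ℕ) * φ i)^2) := by
    apply Continuous.pow
    exact continuous_finset_sum _ fun i _ => (continuous_pow _).mul continuous_const
  have hInt : ∀ u v : ℝ, IntervalIntegrable
      (fun t : ℝ => (∑ i : Fin m, t ^ (i:ℕ) * φ i)^2) volume u v :=
    fun u v => hFc.intervalIntegrable u v
  have hsig := aux_sigma γ m μ hμ H hH φ σ heig hunit
  have hsplit : σ = (∫ t in (0:ℝ)..c, (∑ i : Fin m, t ^ (i:ℕ) * φ i)^2)
      + ((∫ t in c..(c+h), (∑ i : Fin m, t ^ (i:ℕ) * φ i)^2)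
        + (∫ t in (c+h)..(1-γ), (∑ i : Fin m, t ^ (i:ℕ) * φ i)^2)) := by
    rw [intervalIntegral.integral_add_adjacent_intervals (hInt c (c+h)) (hInt (c+h) (1-γ)),
      intervalIntegral.integral_add_adjacent_intervals (hInt 0 c) (hInt c (1-γ))]
    exact hsig
  have hnn1 : 0 ≤ ∫ t in (0:ℝ)..c, (∑ i : Fin m, t ^ (i:ℕ) * φ i)^2 :=
    intervalIntegral.integral_nonneg hc0 (fun u _ => sq_nonneg _)
  have hnn3 : 0 ≤ ∫ t in (c+h)..(1-γ), (∑ i : Fin m, t ^ (i:ℕ) * φ i)^2 :=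
    intervalIntegral.integral_nonneg hchx (fun u _ => sq_nonneg _)
  have hmid : (∫ t in c..(c+h), (∑ i : Fin m, t ^ (i:ℕ) * φ i)^2) ≤ σ := by linarith
  have hmid2 : (∫ t in c..(c+h), (∑ i : Fin m, t ^ (i:ℕ) * φ i)^2)
      = (∫ t in c..a, (∑ i : Fin m, t ^ (i:ℕ) * φ i)^2)
        + (∫ t in a..(c+h), (∑ i : Fin m, t ^ (i:ℕ) * φ i)^2) :=
    (intervalIntegral.integral_add_adjacent_intervals (hInt c a) (hInt a (c+h))).symm
  have hp1 : (∫ t in c..a, ((M - L*a) + L*t))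
      ≤ ∫ t in c..a, (∑ i : Fin m, t ^ (i:ℕ) * φ i)^2 := by
    apply intervalIntegral.integral_mono_on hca
      ((by fun_prop : Continuous fun t : ℝ => (M - L*a) + L*t).intervalIntegrable _ _)
      (hInt c a)
    intro u hu
    have hu' : u ∈ Set.Icc 0 (1-γ) := ⟨le_trans hc0 hu.1, le_trans hu.2 hax⟩
    have hlip := aux_lip γ hγ0 hγ23 m φ hunit u a hu' ha
    have habs : |u - a| = a - u := by rw [abs_of_nonpos (by linarith [hu.2])]; ring
    rw [habs] at hlip
    have h2 := (abs_le.1 hlip).1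
    have hL : 2/γ^2 = L := rfl
    rw [hL] at h2
    nlinarith [h2]
  have hp2 : (∫ t in a..(c+h), ((M + L*a) + (-L)*t))
      ≤ ∫ t in a..(c+h), (∑ i : Fin m, t ^ (i:ℕ) * φ i)^2 := by
    apply intervalIntegral.integral_mono_on hac
      ((by fun_prop : Continuous fun t : ℝ => (M + L*a) + (-L)*t).intervalIntegrable _ _)
      (hInt a (c+h))
    intro u hu
    have hu' : u ∈ Set.Icc 0 (1-γ) := ⟨le_trans ha.1 hu.1, le_trans hu.2 hchx⟩
    have hlip := aux_lip γ hγ0 hγ23 m φ hunit u a hu' ha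
    have habs : |u - a| = u - a := abs_of_nonneg (by linarith [hu.1])
    rw [habs] at hlip
    have h2 := (abs_le.1 hlip).1
    have hL : 2/γ^2 = L := rfl
    rw [hL] at h2
    nlinarith [h2]
  rw [aux_lin] at hp1 hp2
  have hkey : γ^2 * M^2 / 4 ≤ σ := by
    have hu0 : 0 ≤ a - c := by linarith
    have hv0 : 0 ≤ c + h - a := by linarith
    have e1 : (M - L*a)*(a-c) + L*((a^2-c^2)/2) = M*(a-c) - L*(a-c)^2/2 := by ring
    have e2 : (M + L*a)*((c+h)-a) + (-L)*(((c+h)^2-a^2)/2)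
        = M*(c+h-a) - L*(c+h-a)^2/2 := by ring
    have hlow : M*(a-c) - L*(a-c)^2/2 + (M*(c+h-a) - L*(c+h-a)^2/2) ≤ σ := by
      rw [← e1, ← e2]; linarith [hp1, hp2, hmid, hmid2]
    have hLuv : 0 ≤ L*((a-c)*(c+h-a)) := mul_nonneg hL0.le (mul_nonneg hu0 hv0)
    have hL2 : L*h*h = M*h := by rw [hLh]
    have hMh : M*h/2 ≤ σ := by linarith [hlow, hLuv, hL2]
    have hhe : γ^2*M^2/4 = M*h/2 := by rw [hhdef]; ring
    linarith
  have hM2 : M ≤ 2/γ * Real.sqrt σ := by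
    have h1 : M^2 * γ^2 ≤ 4 * σ := by linarith [hkey]
    have h2 : M^2 ≤ ((2/γ) * Real.sqrt σ)^2 := by
      rw [mul_pow, Real.sq_sqrt hσ, div_pow]
      rw [div_mul_eq_mul_div, le_div_iff₀ (by positivity)]
      nlinarith [h1]
    calc M = Real.sqrt (M^2) := (Real.sqrt_sq hM0).symm
      _ ≤ Real.sqrt (((2/γ)*Real.sqrt σ)^2) := Real.sqrt_le_sqrt h2
      _ = (2/γ)*Real.sqrt σ := Real.sqrt_sq (by positivity)
  calc |∑ i : Fin m, a ^ (i:ℕ) * φ i| = Real.sqrt M := by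
        rw [hMdef, Real.sqrt_sq_eq_abs]
    _ ≤ Real.sqrt ((2/γ) * Real.sqrt σ) := Real.sqrt_le_sqrt hM2
    _ = Real.sqrt (2/γ) * Real.sqrt (Real.sqrt σ) := Real.sqrt_mul (by positivity) _
    _ = Real.sqrt (2/γ) * σ ^ ((1:ℝ)/4) := by
        congr 1
        rw [Real.sqrt_eq_rpow, Real.sqrt_eq_rpow, ← Real.rpow_mul hσ]
        norm_num
end

section
/- If ‖(A+BK)^i‖ ≤ κ²(1-γ)^i for all i ≥ 0, ‖K‖ ≤ κ, and ‖w_s‖ ≤ W for all s, then the truncation error of the open-loop controller satisfies ‖K Σ_{i=1}^t (A+BK)^{i-1} w_{t-i} − K Σ_{i=1}^m (A+BK)^{i-1} w_{t-i}‖ ≤ (κ³W/γ)(1-γ)^m for all t > m. -/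
/-- If `‖(A+BK)^i‖ ≤ κ²(1-γ)^i` for all `i ≥ 0`, `‖K‖ ≤ κ`, and `‖w_s‖ ≤ W` for all
`s`, then the truncation error of the open-loop controller satisfies
`‖K Σ_{i=1}^t (A+BK)^{i-1} w_{t-i} − K Σ_{i=1}^m (A+BK)^{i-1} w_{t-i}‖ ≤ (κ³W/γ)(1-γ)^m`
for all `t > m`. -/
theorem oloc_truncation_error (d n : ℕ)
    (A : EuclideanSpace ℝ (Fin d) →L[ℝ] EuclideanSpace ℝ (Fin d))
    (B : EuclideanSpace ℝ (Fin n) →L[ℝ] EuclideanSpace ℝ (Fin d))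
    (K : EuclideanSpace ℝ (Fin d) →L[ℝ] EuclideanSpace ℝ (Fin n))
    (κ γ W : ℝ) (hκ : 1 ≤ κ) (hW : 1 ≤ W) (hγ0 : 0 < γ) (hγ1 : γ < 1)
    (hpow : ∀ i : ℕ, ‖(A + B.comp K) ^ i‖ ≤ κ ^ 2 * (1 - γ) ^ i)
    (hK : ‖K‖ ≤ κ)
    (w : ℕ → EuclideanSpace ℝ (Fin d)) (hw : ∀ s, ‖w s‖ ≤ W)
    (m t : ℕ) (hmt : m < t) :
    ‖K (∑ i ∈ Finset.Icc 1 t, ((A + B.comp K) ^ (i - 1)) (w (t - i))) -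
      K (∑ i ∈ Finset.Icc 1 m, ((A + B.comp K) ^ (i - 1)) (w (t - i)))‖ ≤
      κ ^ 3 * W / γ * (1 - γ) ^ m := by
  set L := A + B.comp K with hL
  have hr0 : (0:ℝ) ≤ 1 - γ := by linarith
  have hr1 : (1:ℝ) - γ < 1 := by linarith
  have hκ0 : (0:ℝ) ≤ κ := by linarith
  have hW0 : (0:ℝ) ≤ W := by linarith
  -- rewrite the difference as a sum over Ioc m t
  have hsplit : ∑ i ∈ Finset.Icc 1 t, (L ^ (i - 1)) (w (t - i)) -
      ∑ i ∈ Finset.Icc 1 m, (L ^ (i - 1)) (w (t - i)) =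
      ∑ i ∈ Finset.Ioc m t, (L ^ (i - 1)) (w (t - i)) := by
    have h1 : Finset.Icc 1 t = Finset.Ioc 0 t := by
      ext x; simp [Nat.lt_iff_add_one_le]
    have h2 : Finset.Icc 1 m = Finset.Ioc 0 m := by
      ext x; simp [Nat.lt_iff_add_one_le]
    rw [h1, h2, ← Finset.sum_Ioc_consecutive _ (Nat.zero_le m) hmt.le]
    abel
  rw [← map_sub, hsplit]
  -- bound the sum
  have hterm : ∀ i ∈ Finset.Ioc m t, ‖(L ^ (i - 1)) (w (t - i))‖ ≤
      κ ^ 2 * W * (1 - γ) ^ (i - 1) := by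
    intro i _
    calc ‖(L ^ (i - 1)) (w (t - i))‖ ≤ ‖L ^ (i - 1)‖ * ‖w (t - i)‖ :=
          (L ^ (i - 1)).le_opNorm _
      _ ≤ (κ ^ 2 * (1 - γ) ^ (i - 1)) * W := by
          apply mul_le_mul (hpow _) (hw _) (norm_nonneg _)
          positivity
      _ = κ ^ 2 * W * (1 - γ) ^ (i - 1) := by ring
  have hsum : ∑ i ∈ Finset.Ioc m t, (1 - γ) ^ (i - 1) ≤ (1 - γ) ^ m / γ := by
    have : Finset.Ioc m t = Finset.Ico (m + 1) (t + 1) := by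
      ext x; simp [Nat.lt_succ_iff, Nat.succ_le_iff]
    rw [this, Finset.sum_Ico_eq_sum_range]
    have h1 : ∀ k, (1 - γ) ^ (m + 1 + k - 1) = (1 - γ) ^ m * (1 - γ) ^ k := by
      intro k
      rw [← pow_add]
      congr 1
      omega
    simp_rw [h1]
    rw [← Finset.mul_sum]
    rw [div_eq_mul_inv]
    apply mul_le_mul_of_nonneg_left _ (by positivity)
    calc ∑ k ∈ Finset.range (t + 1 - (m + 1)), (1 - γ) ^ k
        ≤ (1 - (1 - γ))⁻¹ := by
          have hsum := hasSum_geometric_of_lt_one hr0 hr1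
          have := Summable.sum_le_tsum (Finset.range (t + 1 - (m + 1)))
            (fun i _ => by positivity) hsum.summable
          rwa [hsum.tsum_eq] at this
      _ = γ⁻¹ := by ring_nf
  calc ‖K (∑ i ∈ Finset.Ioc m t, (L ^ (i - 1)) (w (t - i)))‖
      ≤ ‖K‖ * ‖∑ i ∈ Finset.Ioc m t, (L ^ (i - 1)) (w (t - i))‖ := K.le_opNorm _
    _ ≤ κ * ∑ i ∈ Finset.Ioc m t, ‖(L ^ (i - 1)) (w (t - i))‖ := by
        apply mul_le_mul hK (norm_sum_le _ _) (norm_nonneg _) hκ0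
    _ ≤ κ * ∑ i ∈ Finset.Ioc m t, κ ^ 2 * W * (1 - γ) ^ (i - 1) := by
        apply mul_le_mul_of_nonneg_left (Finset.sum_le_sum hterm) hκ0
    _ = κ ^ 3 * W * ∑ i ∈ Finset.Ioc m t, (1 - γ) ^ (i - 1) := by
        rw [← Finset.mul_sum, ← mul_assoc]; ring_nf
    _ ≤ κ ^ 3 * W * ((1 - γ) ^ m / γ) := by
        apply mul_le_mul_of_nonneg_left hsum (by positivity)
    _ = κ ^ 3 * W / γ * (1 - γ) ^ m := by ring
end

section
/- If x_t(M) and x_t(M') are the states generated by a linear system with two spectral parameter sets, then ‖x_t(M) − x_t(M')‖ ≤ (κ²κ_B/γ)·W√m·max_j |σ_j|^{1/4}·Σ_{j=1}^h ‖M_j − M'_j‖, given ‖A^i‖ ≤ κ²(1-γ)^i, ‖B‖ ≤ κ_B, ‖w_s‖ ≤ W, and each filter φ_j a unit vector. -/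
/-- If `x_t(M)` and `x_t(M')` are the states generated by the linear system with two
spectral parameter sets `M, M'`, then
`‖x_t(M) − x_t(M')‖ ≤ (κ²κ_B/γ)·W√m·max_j σ_j^{1/4}·Σ_{j=1}^h ‖M_j − M'_j‖`,
given `‖A^i‖ ≤ κ²(1-γ)^i`, `‖B‖ ≤ κ_B`, `‖W̃_s‖ ≤ W√m`, each filter `φ_j` a unit
vector, and `S` any bound on `max_j σ_j^{1/4}`. -/
theorem spectral_state_diff_bound (d n m h : ℕ) (κ κB γ W S : ℝ)
    (hκ : 1 ≤ κ) (hκB : 0 ≤ κB) (hγ0 : 0 < γ) (hγ1 : γ < 1) (hW : 0 ≤ W)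
    (A : EuclideanSpace ℝ (Fin d) →L[ℝ] EuclideanSpace ℝ (Fin d))
    (B : EuclideanSpace ℝ (Fin n) →L[ℝ] EuclideanSpace ℝ (Fin d))
    (hA : ∀ i : ℕ, ‖A ^ i‖ ≤ κ ^ 2 * (1 - γ) ^ i) (hB : ‖B‖ ≤ κB)
    (w : ℕ → EuclideanSpace ℝ (Fin d)) (hw : ∀ s, ‖w s‖ ≤ W)
    (Wt : ℕ → (EuclideanSpace ℝ (Fin m) →L[ℝ] EuclideanSpace ℝ (Fin d)))
    (hWt : ∀ s, ‖Wt s‖ ≤ W * Real.sqrt m)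
    (φ : Fin h → EuclideanSpace ℝ (Fin m)) (hφ : ∀ j, ‖φ j‖ = 1)
    (σ : Fin h → ℝ) (hσ : ∀ j, 0 ≤ σ j)
    (hS : ∀ j, (σ j) ^ ((1:ℝ)/4) ≤ S)
    (M M' : Fin h → (EuclideanSpace ℝ (Fin d) →L[ℝ] EuclideanSpace ℝ (Fin n)))
    (x : (Fin h → (EuclideanSpace ℝ (Fin d) →L[ℝ] EuclideanSpace ℝ (Fin n))) → ℕ →
        EuclideanSpace ℝ (Fin d))
    (hx : ∀ N t, x N t =
      (∑ i ∈ Finset.Icc 1 t, (A ^ (i - 1)) (w (t - i))) +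
      ∑ i ∈ Finset.Icc 1 t, (A ^ (i - 1))
        (B (∑ j : Fin h, (σ j) ^ ((1:ℝ)/4) • (N j) ((Wt (t - i)) (φ j)))))
    (t : ℕ) :
    ‖x M t - x M' t‖ ≤
      κ ^ 2 * κB / γ * (W * Real.sqrt m) * S * ∑ j : Fin h, ‖M j - M' j‖ := by
  have hWm : 0 ≤ W * Real.sqrt m := mul_nonneg hW (Real.sqrt_nonneg _)
  -- the inner difference bound
  have key : ∀ i : ℕ,
      ‖∑ j : Fin h, (σ j) ^ ((1:ℝ)/4) • ((M j - M' j) ((Wt (t - i)) (φ j)))‖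
        ≤ (W * Real.sqrt m) * (S * ∑ j : Fin h, ‖M j - M' j‖) := by
    intro i
    calc ‖∑ j : Fin h, (σ j) ^ ((1:ℝ)/4) • ((M j - M' j) ((Wt (t - i)) (φ j)))‖
        ≤ ∑ j : Fin h, ‖(σ j) ^ ((1:ℝ)/4) • ((M j - M' j) ((Wt (t - i)) (φ j)))‖ :=
          norm_sum_le _ _
      _ ≤ ∑ j : Fin h, (W * Real.sqrt m) * (S * ‖M j - M' j‖) := by
          refine Finset.sum_le_sum fun j _ => ?_
          have hσj : 0 ≤ (σ j) ^ ((1:ℝ)/4) := Real.rpow_nonneg (hσ j) _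
          have hSj : 0 ≤ S := hσj.trans (hS j)
          have h1 : ‖(M j - M' j) ((Wt (t - i)) (φ j))‖
              ≤ ‖M j - M' j‖ * (W * Real.sqrt m) := by
            calc ‖(M j - M' j) ((Wt (t - i)) (φ j))‖
                ≤ ‖M j - M' j‖ * ‖(Wt (t - i)) (φ j)‖ :=
                  ContinuousLinearMap.le_opNorm _ _
              _ ≤ ‖M j - M' j‖ * (W * Real.sqrt m) := by
                  refine mul_le_mul_of_nonneg_left ?_ (norm_nonneg _)
                  calc ‖(Wt (t - i)) (φ j)‖ ≤ ‖Wt (t - i)‖ * ‖φ j‖ :=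
                        ContinuousLinearMap.le_opNorm _ _
                    _ = ‖Wt (t - i)‖ := by rw [hφ j, mul_one]
                    _ ≤ W * Real.sqrt m := hWt _
          rw [norm_smul, Real.norm_eq_abs, abs_of_nonneg hσj]
          calc (σ j) ^ ((1:ℝ)/4) * ‖(M j - M' j) ((Wt (t - i)) (φ j))‖
              ≤ S * (‖M j - M' j‖ * (W * Real.sqrt m)) :=
                mul_le_mul (hS j) h1 (norm_nonneg _) hSj
            _ = (W * Real.sqrt m) * (S * ‖M j - M' j‖) := by ring
      _ = (W * Real.sqrt m) * (S * ∑ j : Fin h, ‖M j - M' j‖) := by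
          simp only [← Finset.mul_sum]
  -- rewrite the difference of states
  have hdiff : x M t - x M' t =
      ∑ i ∈ Finset.Icc 1 t, (A ^ (i - 1))
        (B (∑ j : Fin h, (σ j) ^ ((1:ℝ)/4) •
          ((M j - M' j) ((Wt (t - i)) (φ j))))) := by
    rw [hx, hx, add_sub_add_left_eq_sub, ← Finset.sum_sub_distrib]
    refine Finset.sum_congr rfl fun i _ => ?_
    rw [← map_sub, ← map_sub, ← Finset.sum_sub_distrib]
    congr 2
    refine Finset.sum_congr rfl fun j _ => ?_
    rw [← smul_sub, ContinuousLinearMap.sub_apply]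
  -- bound each summand
  have hterm : ∀ i : ℕ,
      ‖(A ^ (i - 1)) (B (∑ j : Fin h, (σ j) ^ ((1:ℝ)/4) •
          ((M j - M' j) ((Wt (t - i)) (φ j)))))‖
        ≤ (1 - γ) ^ (i - 1) *
          (κ ^ 2 * κB * ((W * Real.sqrt m) * (S * ∑ j : Fin h, ‖M j - M' j‖))) := by
    intro i
    calc ‖(A ^ (i - 1)) (B (∑ j : Fin h, (σ j) ^ ((1:ℝ)/4) •
            ((M j - M' j) ((Wt (t - i)) (φ j)))))‖
        ≤ ‖A ^ (i - 1)‖ * ‖B (∑ j : Fin h, (σ j) ^ ((1:ℝ)/4) •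
            ((M j - M' j) ((Wt (t - i)) (φ j))))‖ := ContinuousLinearMap.le_opNorm _ _
      _ ≤ (κ ^ 2 * (1 - γ) ^ (i - 1)) *
            (κB * ((W * Real.sqrt m) * (S * ∑ j : Fin h, ‖M j - M' j‖))) := by
          refine mul_le_mul (hA _) ?_ (norm_nonneg _)
            (mul_nonneg (by positivity) (pow_nonneg (by linarith) _))
          calc ‖B (∑ j : Fin h, (σ j) ^ ((1:ℝ)/4) •
                ((M j - M' j) ((Wt (t - i)) (φ j))))‖
              ≤ ‖B‖ * ‖∑ j : Fin h, (σ j) ^ ((1:ℝ)/4) •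
                ((M j - M' j) ((Wt (t - i)) (φ j)))‖ := ContinuousLinearMap.le_opNorm _ _
            _ ≤ κB * ((W * Real.sqrt m) * (S * ∑ j : Fin h, ‖M j - M' j‖)) :=
                mul_le_mul hB (key i) (norm_nonneg _) hκB
      _ = (1 - γ) ^ (i - 1) *
            (κ ^ 2 * κB * ((W * Real.sqrt m) * (S * ∑ j : Fin h, ‖M j - M' j‖))) := by
          ring
  -- geometric series bound
  have hgeom : ∑ i ∈ Finset.Icc 1 t, (1 - γ) ^ (i - 1) ≤ 1 / γ := by
    have h0 : (0:ℝ) ≤ 1 - γ := by linarith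
    have h1 : (1:ℝ) - γ < 1 := by linarith
    have e : ∀ T : ℕ, ∑ i ∈ Finset.Icc 1 T, (1 - γ) ^ (i - 1)
        = ∑ k ∈ Finset.range T, (1 - γ) ^ k := by
      intro T
      induction T with
      | zero => simp
      | succ T ih =>
        rw [Finset.sum_Icc_succ_top (by omega), ih, Finset.sum_range_succ]
        simp
    rw [e]
    have hs := hasSum_geometric_of_lt_one h0 h1
    calc ∑ k ∈ Finset.range t, (1 - γ) ^ k
        ≤ ∑' k, (1 - γ) ^ k := Summable.sum_le_tsum _ (fun k _ => pow_nonneg h0 k) hs.summable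
      _ = (1 - (1 - γ))⁻¹ := hs.tsum_eq
      _ = 1 / γ := by rw [one_div]; ring_nf
  -- nonnegativity of the constant factor
  have hC : 0 ≤ κ ^ 2 * κB * ((W * Real.sqrt m) * (S * ∑ j : Fin h, ‖M j - M' j‖)) := by
    rcases Nat.eq_zero_or_pos h with h0 | h0
    · subst h0; simp
    · have hS0 : 0 ≤ S :=
        (Real.rpow_nonneg (hσ ⟨0, h0⟩) _).trans (hS ⟨0, h0⟩)
      have : 0 ≤ ∑ j : Fin h, ‖M j - M' j‖ :=
        Finset.sum_nonneg fun j _ => norm_nonneg _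
      positivity
  calc ‖x M t - x M' t‖
      = ‖∑ i ∈ Finset.Icc 1 t, (A ^ (i - 1))
          (B (∑ j : Fin h, (σ j) ^ ((1:ℝ)/4) •
            ((M j - M' j) ((Wt (t - i)) (φ j)))))‖ := by rw [hdiff]
    _ ≤ ∑ i ∈ Finset.Icc 1 t, ‖(A ^ (i - 1))
          (B (∑ j : Fin h, (σ j) ^ ((1:ℝ)/4) •
            ((M j - M' j) ((Wt (t - i)) (φ j)))))‖ := norm_sum_le _ _
    _ ≤ ∑ i ∈ Finset.Icc 1 t, (1 - γ) ^ (i - 1) *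
          (κ ^ 2 * κB * ((W * Real.sqrt m) * (S * ∑ j : Fin h, ‖M j - M' j‖))) :=
        Finset.sum_le_sum fun i _ => hterm i
    _ = (∑ i ∈ Finset.Icc 1 t, (1 - γ) ^ (i - 1)) *
          (κ ^ 2 * κB * ((W * Real.sqrt m) * (S * ∑ j : Fin h, ‖M j - M' j‖))) := by
        rw [Finset.sum_mul]
    _ ≤ (1 / γ) *
          (κ ^ 2 * κB * ((W * Real.sqrt m) * (S * ∑ j : Fin h, ‖M j - M' j‖))) :=
        mul_le_mul_of_nonneg_right hgeom hC
    _ = κ ^ 2 * κB / γ * (W * Real.sqrt m) * S * ∑ j : Fin h, ‖M j - M' j‖ := by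
        ring
end
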